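/- (Proposition 1, rate bound for the variable-length encoder.) Let t ≥ 1, let B be a finite nonempty set of unit vectors in ℂ^t, let P ≥ 1, set β = (t+1)·log P, and let E = {h ∈ ℂ^t : ∃x ∈ B, |⟨x, h⟩|²·P < β}. Then μ(ℂ^t \ E)·1 + μ(E)·(1 + ⌈log₂ |B|⌉) ≤ 1 + (t+1)·|B|·log₂(4·|B|)·(log P)/P. (In particular, μ(E) ≤ |B|·(1 − exp(−β/P)) ≤ |B|·β/P by a union bound.) -/

import Mathlib

open MeasureTheory

noncomputable instance (t : ℕ) : MeasureSpace (EuclideanSpace ℂ (Fin t)) :=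
  MeasureSpace.mk (toMeasurableSpace := inferInstance)
    (Measure.map (MeasurableEquiv.toLp 2 (Fin t → ℂ)) (volume : Measure (Fin t → ℂ)))

/-- The Gaussian tail function `Q(x) = (1/√(2π)) ∫_x^∞ exp(-u²/2) du`. -/
noncomputable def gaussianQ (x : ℝ) : ℝ :=
  (Real.sqrt (2 * Real.pi))⁻¹ * ∫ u in Set.Ioi x, Real.exp (-(u ^ 2) / 2)

/-- The standard complex Gaussian measure `CN(0, I_t)` on `ℂ^t`, with density
`h ↦ π^{-t} exp(-‖h‖²)` with respect to Lebesgue measure. -/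
noncomputable def stdCGauss (t : ℕ) : Measure (EuclideanSpace ℂ (Fin t)) :=
  volume.withDensity fun h => ENNReal.ofReal ((Real.pi ^ t)⁻¹ * Real.exp (-‖h‖ ^ 2))

section Helpers

open Real

instance vlqBorel (t : ℕ) : BorelSpace (EuclideanSpace ℂ (Fin t)) := inferInstance

instance vlqHaarPi (t : ℕ) : Measure.IsAddHaarMeasure (volume : Measure (EuclideanSpace ℂ (Fin t))) := by
  show Measure.IsAddHaarMeasure
    (Measure.map (MeasurableEquiv.toLp 2 (Fin t → ℂ)) (volume : Measure (Fin t → ℂ)))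
  exact (EuclideanSpace.equiv (Fin t) ℂ).symm.isAddHaarMeasure_map volume

lemma vlq_lintegral_euc {t : ℕ} (f : EuclideanSpace ℂ (Fin t) → ENNReal) :
    ∫⁻ h, f h = ∫⁻ x : Fin t → ℂ, f (WithLp.toLp 2 x) := by
  show ∫⁻ h, f h ∂(Measure.map (MeasurableEquiv.toLp 2 (Fin t → ℂ)) volume) = _
  rw [lintegral_map_equiv]
  rfl

lemma vlq_lintegral_real_gauss :
    ∫⁻ x : ℝ, ENNReal.ofReal (Real.exp (-x ^ 2)) = ENNReal.ofReal (Real.sqrt Real.pi) := by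
  rw [← ofReal_integral_eq_lintegral_ofReal]
  · have := integral_gaussian 1
    simp only [neg_mul, one_mul] at this
    rw [this, div_one]
  · simpa using integrable_exp_neg_mul_sq (one_pos)
  · exact Filter.Eventually.of_forall fun x => (Real.exp_pos _).le

lemma vlq_lintegral_cgauss :
    ∫⁻ z : ℂ, ENNReal.ofReal (Real.exp (-‖z‖ ^ 2)) = ENNReal.ofReal Real.pi := by
  have h := Complex.volume_preserving_equiv_real_prod.symm
  rw [← h.lintegral_comp (f := fun z : ℂ => ENNReal.ofReal (Real.exp (-‖z‖ ^ 2)))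
    (by fun_prop)]
  have key : ∀ p : ℝ × ℝ, ENNReal.ofReal (Real.exp (-‖Complex.measurableEquivRealProd.symm p‖ ^ 2))
      = ENNReal.ofReal (Real.exp (-p.1 ^ 2)) * ENNReal.ofReal (Real.exp (-p.2 ^ 2)) := by
    intro p
    rw [← ENNReal.ofReal_mul (Real.exp_pos _).le, ← Real.exp_add]
    congr 2
    have h1 : Complex.measurableEquivRealProd.symm p = Complex.mk p.1 p.2 := rfl
    rw [h1]
    simp [Complex.sq_norm, Complex.normSq_mk]
    ring
  simp_rw [key]
  rw [show (volume : Measure (ℝ × ℝ)) = (volume : Measure ℝ).prod volume from rfl,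
    lintegral_prod_mul (f := fun x : ℝ => ENNReal.ofReal (Real.exp (-x ^ 2)))
      (g := fun x : ℝ => ENNReal.ofReal (Real.exp (-x ^ 2))) (by fun_prop) (by fun_prop),
    vlq_lintegral_real_gauss, ← ENNReal.ofReal_mul (Real.sqrt_nonneg _),
    Real.mul_self_sqrt Real.pi_pos.le]

lemma vlq_lintegral_pi_fin_prod {n : ℕ} (f : Fin n → ℂ → ENNReal) (hf : ∀ i, Measurable (f i)) :
    ∫⁻ x : Fin n → ℂ, ∏ i, f i (x i) = ∏ i, ∫⁻ z : ℂ, f i z := by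
  induction n with
  | zero => simp [lintegral_const, MeasureTheory.volume_pi, Measure.pi_empty_univ]
  | succ n ih =>
    have A := (measurePreserving_piFinSuccAbove (fun _ : Fin (n + 1) => (volume : Measure ℂ)) 0).symm
    rw [MeasureTheory.volume_pi, ← A.lintegral_comp (f := fun x => ∏ i, f i (x i))
      (Finset.measurable_prod _ fun i _ => (hf i).comp (measurable_pi_apply i))]
    have key : ∀ p : ℂ × (Fin n → ℂ),
        (∏ i, f i (((MeasurableEquiv.piFinSuccAbove (fun _ => ℂ) 0).symm p) i))
          = f 0 p.1 * ∏ i : Fin n, f i.succ (p.2 i) := by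
      intro p
      simp [MeasurableEquiv.piFinSuccAbove_symm_apply, Fin.insertNth_zero, Fin.prod_univ_succ]
    simp_rw [key]
    rw [lintegral_prod_mul (f := f 0) (g := fun y : Fin n → ℂ => ∏ i : Fin n, f i.succ (y i))
      ((hf 0).aemeasurable)
      ((Finset.measurable_prod _ fun (i : Fin n) _ =>
        (hf i.succ).comp (measurable_pi_apply i)).aemeasurable)]
    rw [← MeasureTheory.volume_pi, ih (fun i => f i.succ) (fun i => hf i.succ), Fin.prod_univ_succ]

lemma vlq_unitary_measurePreserving {t : ℕ}
    (U : EuclideanSpace ℂ (Fin t) ≃ₗᵢ[ℂ] EuclideanSpace ℂ (Fin t)) :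
    MeasurePreserving U volume volume := by
  refine ⟨U.continuous.measurable, ?_⟩
  set ν : Measure (EuclideanSpace ℂ (Fin t)) := Measure.map U volume with hν
  haveI : Measure.IsAddHaarMeasure ν := by
    have := (U.toLinearEquiv.toAddEquiv).isAddHaarMeasure_map
      (volume : Measure (EuclideanSpace ℂ (Fin t))) U.continuous U.symm.continuous
    exact this
  have huniq : ν = ν.addHaarScalarFactor volume • volume :=
    Measure.isAddLeftInvariant_eq_smul ν volume
  have hball : ν (Metric.ball 0 1) = volume (Metric.ball (0 : EuclideanSpace ℂ (Fin t)) 1) := by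
    rw [hν, Measure.map_apply U.continuous.measurable measurableSet_ball]
    congr 1
    ext z
    simp [Metric.mem_ball, dist_eq_norm, U.norm_map, map_zero]
  have hpos : volume (Metric.ball (0 : EuclideanSpace ℂ (Fin t)) 1) ≠ 0 :=
    (Metric.measure_ball_pos volume 0 one_pos).ne'
  have hfin : volume (Metric.ball (0 : EuclideanSpace ℂ (Fin t)) 1) ≠ ⊤ :=
    measure_ball_lt_top.ne
  have hc' : ν.addHaarScalarFactor volume = (1 : NNReal) := by
    have hc : (ν.addHaarScalarFactor volume : ENNReal) = 1 := by
      have := hball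
      rw [huniq] at this
      simp only [Measure.smul_apply, smul_eq_mul] at this
      have h1 : (ν.addHaarScalarFactor volume : ENNReal)
          * volume (Metric.ball (0 : EuclideanSpace ℂ (Fin t)) 1)
          = 1 * volume (Metric.ball (0 : EuclideanSpace ℂ (Fin t)) 1) := by
        rw [one_mul]; exact this
      exact (ENNReal.mul_left_inj hpos hfin).mp h1
    exact_mod_cast hc
  rw [huniq, hc']
  simp

lemma vlq_dens_measurable (t : ℕ) :
    Measurable fun h : EuclideanSpace ℂ (Fin t) =>
      ENNReal.ofReal ((Real.pi ^ t)⁻¹ * Real.exp (-‖h‖ ^ 2)) := by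
  fun_prop

lemma vlq_stdCGauss_preimage {t : ℕ}
    (U : EuclideanSpace ℂ (Fin t) ≃ₗᵢ[ℂ] EuclideanSpace ℂ (Fin t))
    {s : Set (EuclideanSpace ℂ (Fin t))} (hs : MeasurableSet s) :
    stdCGauss t (U ⁻¹' s) = stdCGauss t s := by
  have hsU : MeasurableSet (U ⁻¹' s) := U.continuous.measurable hs
  rw [stdCGauss, withDensity_apply _ hsU, withDensity_apply _ hs,
    ← lintegral_indicator hsU, ← lintegral_indicator hs]
  have hdU : (fun h => ENNReal.ofReal ((Real.pi ^ t)⁻¹ * Real.exp (-‖h‖ ^ 2)))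
      ∘ (U : EuclideanSpace ℂ (Fin t) → EuclideanSpace ℂ (Fin t))
      = fun h => ENNReal.ofReal ((Real.pi ^ t)⁻¹ * Real.exp (-‖h‖ ^ 2)) := by
    funext h
    simp [U.norm_map]
  calc ∫⁻ h, (U ⁻¹' s).indicator
        (fun h => ENNReal.ofReal ((Real.pi ^ t)⁻¹ * Real.exp (-‖h‖ ^ 2))) h
      = ∫⁻ h, s.indicator
        (fun h => ENNReal.ofReal ((Real.pi ^ t)⁻¹ * Real.exp (-‖h‖ ^ 2))) (U h) := by
        congr 1
        funext h
        conv_lhs => rw [← hdU]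
        rw [Set.indicator_comp_right]
    _ = ∫⁻ h, s.indicator
        (fun h => ENNReal.ofReal ((Real.pi ^ t)⁻¹ * Real.exp (-‖h‖ ^ 2))) h :=
      (vlq_unitary_measurePreserving U).lintegral_comp
        ((vlq_dens_measurable t).indicator hs)

lemma vlq_dens_prod {t : ℕ} (h : EuclideanSpace ℂ (Fin t)) :
    ENNReal.ofReal ((Real.pi ^ t)⁻¹ * Real.exp (-‖h‖ ^ 2))
      = ∏ i, ENNReal.ofReal (Real.pi⁻¹ * Real.exp (-‖h i‖ ^ 2)) := by
  rw [← ENNReal.ofReal_prod_of_nonneg (fun i _ => by positivity)]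
  congr 1
  have hn : ‖h‖ ^ 2 = ∑ i, ‖h i‖ ^ 2 := by
    rw [EuclideanSpace.norm_eq, Real.sq_sqrt (Finset.sum_nonneg fun i _ => by positivity)]
  rw [hn, Finset.prod_mul_distrib, Finset.prod_const, ← Real.exp_sum]
  simp [Finset.card_univ, inv_pow]

lemma vlq_lintegral_g :
    ∫⁻ z : ℂ, ENNReal.ofReal (Real.pi⁻¹ * Real.exp (-‖z‖ ^ 2)) = 1 := by
  simp_rw [ENNReal.ofReal_mul (by positivity : (0:ℝ) ≤ Real.pi⁻¹)]
  rw [lintegral_const_mul _ (by fun_prop), vlq_lintegral_cgauss,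
    ← ENNReal.ofReal_mul (by positivity), inv_mul_cancel₀ Real.pi_pos.ne', ENNReal.ofReal_one]

instance vlq_prob (t : ℕ) : IsProbabilityMeasure (stdCGauss t) := by
  constructor
  rw [stdCGauss, withDensity_apply _ MeasurableSet.univ, Measure.restrict_univ]
  simp_rw [vlq_dens_prod]
  have : ∫⁻ x : Fin t → ℂ, ∏ i, ENNReal.ofReal (Real.pi⁻¹ * Real.exp (-‖x i‖ ^ 2))
      = ∏ _i : Fin t, ∫⁻ z : ℂ, ENNReal.ofReal (Real.pi⁻¹ * Real.exp (-‖z‖ ^ 2)) :=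
    vlq_lintegral_pi_fin_prod (fun _ z => ENNReal.ofReal (Real.pi⁻¹ * Real.exp (-‖z‖ ^ 2))) (fun i => by fun_prop)
  rw [show (∫⁻ h : EuclideanSpace ℂ (Fin t), ∏ i, ENNReal.ofReal (Real.pi⁻¹ * Real.exp (-‖h i‖ ^ 2)))
      = ∫⁻ x : Fin t → ℂ, ∏ i, ENNReal.ofReal (Real.pi⁻¹ * Real.exp (-‖x i‖ ^ 2)) from vlq_lintegral_euc _, this]
  rw [Finset.prod_const, vlq_lintegral_g, one_pow]

lemma vlq_coord_set_meas (t : ℕ) (i : Fin t) (c : ℝ) :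
    MeasurableSet {g : EuclideanSpace ℂ (Fin t) | ‖g i‖ ^ 2 < c} := by
  have h1 : Measurable fun g : EuclideanSpace ℂ (Fin t) => g i := by fun_prop
  exact measurableSet_lt (by fun_prop) measurable_const

lemma vlq_slab_bound (t : ℕ) (i : Fin t) (c : ℝ) (hc : 0 ≤ c) :
    stdCGauss t {g : EuclideanSpace ℂ (Fin t) | ‖g i‖ ^ 2 < c} ≤ ENNReal.ofReal c := by
  have hDmeas : MeasurableSet {w : ℂ | ‖w‖ ^ 2 < c} :=
    measurableSet_lt (by fun_prop) measurable_const
  have hSmeas := vlq_coord_set_meas t i c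
  set f : Fin t → ℂ → ENNReal := fun j z =>
    (if j = i then ({w : ℂ | ‖w‖ ^ 2 < c}.indicator (fun _ => (1 : ENNReal)) z) else 1)
      * ENNReal.ofReal (Real.pi⁻¹ * Real.exp (-‖z‖ ^ 2)) with hf
  have hfmeas : ∀ j, Measurable (f j) := by
    intro j
    apply Measurable.mul _ (by fun_prop)
    by_cases hj : j = i
    · simp only [hj, if_pos rfl]
      exact measurable_const.indicator hDmeas
    · simp only [if_neg hj]
      exact measurable_const
  have hfi : ∀ z, f i z = ({w : ℂ | ‖w‖ ^ 2 < c}.indicator (fun _ => (1 : ENNReal)) z)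
      * ENNReal.ofReal (Real.pi⁻¹ * Real.exp (-‖z‖ ^ 2)) := fun z => by simp [hf]
  have hfj : ∀ j, j ≠ i → ∀ z, f j z = ENNReal.ofReal (Real.pi⁻¹ * Real.exp (-‖z‖ ^ 2)) :=
    fun j hj z => by simp [hf, hj]
  have hpoint : ∀ h : EuclideanSpace ℂ (Fin t),
      {g : EuclideanSpace ℂ (Fin t) | ‖g i‖ ^ 2 < c}.indicator
        (fun h => ENNReal.ofReal ((Real.pi ^ t)⁻¹ * Real.exp (-‖h‖ ^ 2))) h
      = ∏ j, f j (h j) := by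
    intro h
    by_cases hmem : h ∈ {g : EuclideanSpace ℂ (Fin t) | ‖g i‖ ^ 2 < c}
    · rw [Set.indicator_of_mem hmem, vlq_dens_prod]
      refine Finset.prod_congr rfl fun j _ => ?_
      by_cases hj : j = i
      · subst hj
        rw [hfi, Set.indicator_of_mem (show h j ∈ {w : ℂ | ‖w‖ ^ 2 < c} from hmem), one_mul]
      · rw [hfj j hj]
    · rw [Set.indicator_of_notMem hmem]
      symm
      apply Finset.prod_eq_zero (Finset.mem_univ i)
      rw [hfi, Set.indicator_of_notMem (show h i ∉ {w : ℂ | ‖w‖ ^ 2 < c} from hmem), zero_mul]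
  calc stdCGauss t {g : EuclideanSpace ℂ (Fin t) | ‖g i‖ ^ 2 < c}
      = ∫⁻ h, {g : EuclideanSpace ℂ (Fin t) | ‖g i‖ ^ 2 < c}.indicator
          (fun h => ENNReal.ofReal ((Real.pi ^ t)⁻¹ * Real.exp (-‖h‖ ^ 2))) h := by
        rw [stdCGauss, withDensity_apply _ hSmeas, lintegral_indicator hSmeas]
    _ = ∏ j, ∫⁻ z : ℂ, f j z := by
        simp_rw [hpoint]
        rw [vlq_lintegral_euc]
        exact vlq_lintegral_pi_fin_prod f hfmeas
    _ = ∫⁻ z : ℂ, f i z := by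
        apply Finset.prod_eq_single_of_mem i (Finset.mem_univ i)
        intro j _ hj
        simp_rw [hfj j hj]
        exact vlq_lintegral_g
    _ ≤ ∫⁻ z : ℂ, {w : ℂ | ‖w‖ ^ 2 < c}.indicator (fun _ => ENNReal.ofReal Real.pi⁻¹) z := by
        apply lintegral_mono
        intro z
        rw [hfi z]
        by_cases hz : z ∈ {w : ℂ | ‖w‖ ^ 2 < c}
        · rw [Set.indicator_of_mem hz, Set.indicator_of_mem hz, one_mul]
          refine ENNReal.ofReal_le_ofReal ?_
          have hexp : Real.exp (-‖z‖ ^ 2) ≤ 1 :=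
            Real.exp_le_one_iff.mpr (neg_nonpos.mpr (sq_nonneg ‖z‖))
          calc Real.pi⁻¹ * Real.exp (-‖z‖ ^ 2) ≤ Real.pi⁻¹ * 1 :=
                mul_le_mul_of_nonneg_left hexp (by positivity)
            _ = Real.pi⁻¹ := mul_one _
        · rw [Set.indicator_of_notMem hz, Set.indicator_of_notMem hz, zero_mul]
    _ ≤ ENNReal.ofReal c := by
        rw [lintegral_indicator_const hDmeas]
        have hset : {w : ℂ | ‖w‖ ^ 2 < c} = Metric.ball 0 (Real.sqrt c) := by
          ext w
          simp only [Set.mem_setOf_eq, Metric.mem_ball, dist_zero_right]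
          exact (Real.lt_sqrt (norm_nonneg w)).symm
        have hπ : ((NNReal.pi : ENNReal)) = ENNReal.ofReal Real.pi := by
          rw [← NNReal.coe_real_pi, ENNReal.ofReal_coe_nnreal]
        rw [hset, Complex.volume_ball, ← ENNReal.ofReal_pow (Real.sqrt_nonneg c),
          Real.sq_sqrt hc, hπ, ← ENNReal.ofReal_mul hc, ← ENNReal.ofReal_mul (by positivity)]
        refine le_of_eq ?_
        congr 1
        field_simp

lemma vlq_vector_bound {t : ℕ} (x : EuclideanSpace ℂ (Fin t)) (hx : ‖x‖ = 1)
    (c : ℝ) (hc : 0 ≤ c) :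
    stdCGauss t {h : EuclideanSpace ℂ (Fin t) | ‖(inner ℂ x h : ℂ)‖ ^ 2 < c}
      ≤ ENNReal.ofReal c := by
  have hON : Orthonormal ℂ (Subtype.val : ({x} : Set (EuclideanSpace ℂ (Fin t))) → _) := by
    refine ⟨fun i => ?_, fun i j hij => absurd (Subsingleton.elim i j) hij⟩
    rcases i with ⟨y, hy⟩
    simp only [Set.mem_singleton_iff] at hy
    subst hy
    simpa using hx
  obtain ⟨u, b, hxu, hb⟩ := hON.exists_orthonormalBasis_extension
  have hxu' : x ∈ u := hxu rfl
  have hcard : Fintype.card u = t := by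
    have h1 := Module.finrank_eq_card_basis b.toBasis
    rw [finrank_euclideanSpace_fin] at h1
    omega
  let e := Fintype.equivFinOfCardEq hcard
  let b' := b.reindex e
  let i : Fin t := e ⟨x, hxu'⟩
  have hb'i : b' i = x := by
    simp only [b', i, OrthonormalBasis.coe_reindex, Function.comp_apply, Equiv.symm_apply_apply]
    rw [hb]
  let U := b'.repr
  have hinner : ∀ h, (inner ℂ x h : ℂ) = (U h) i := by
    intro h
    rw [← hb'i]
    exact (b'.repr_apply_apply h i).symm
  have hset : {h : EuclideanSpace ℂ (Fin t) | ‖(inner ℂ x h : ℂ)‖ ^ 2 < c}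
      = U ⁻¹' {g : EuclideanSpace ℂ (Fin t) | ‖g i‖ ^ 2 < c} := by
    ext h
    simp only [Set.mem_setOf_eq, Set.mem_preimage]
    rw [hinner h]
  rw [hset, vlq_stdCGauss_preimage U (vlq_coord_set_meas t i c)]
  exact vlq_slab_bound t i c hc

end Helpers

/-- Proposition 1 (rate bound): the variable-length encoder feeds back 1 bit on the complement
of `E = {h : ∃ x ∈ B, |⟨x,h⟩|² P < β}` and `1 + ⌈log₂ |B|⌉` bits on `E`, giving expected rate
at most `1 + (t+1)|B| log₂(4|B|) (log P)/P`. -/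
theorem vlq_rate_bound (t : ℕ) (ht : 1 ≤ t)
    (B : Finset (EuclideanSpace ℂ (Fin t))) (hB : B.Nonempty)
    (hBunit : ∀ x ∈ B, ‖x‖ = 1)
    (P : ℝ) (hP : 1 ≤ P) :
    (stdCGauss t {h | ∃ x ∈ B, ‖(inner ℂ x h : ℂ)‖ ^ 2 * P < ((t : ℝ) + 1) * Real.log P}ᶜ).toReal
        * 1
      + (stdCGauss t {h | ∃ x ∈ B, ‖(inner ℂ x h : ℂ)‖ ^ 2 * P < ((t : ℝ) + 1) * Real.log P}).toReal
        * (1 + (⌈Real.logb 2 (B.card : ℝ)⌉ : ℝ))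
    ≤ 1 + ((t : ℝ) + 1) * (B.card : ℝ) * Real.logb 2 (4 * (B.card : ℝ)) * Real.log P / P := by
  have hP0 : (0 : ℝ) < P := lt_of_lt_of_le one_pos hP
  have hlogP : (0 : ℝ) ≤ Real.log P := Real.log_nonneg hP
  set β : ℝ := ((t : ℝ) + 1) * Real.log P with hβdef
  have hβ : 0 ≤ β := by positivity
  have hc' : 0 ≤ β / P := div_nonneg hβ hP0.le
  set A : EuclideanSpace ℂ (Fin t) → Set (EuclideanSpace ℂ (Fin t)) :=
    fun x => {h | ‖(inner ℂ x h : ℂ)‖ ^ 2 < β / P} with hA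
  have hAmeas : ∀ x : EuclideanSpace ℂ (Fin t), MeasurableSet (A x) := by
    intro x
    have hcont : Continuous fun h : EuclideanSpace ℂ (Fin t) => ‖(inner ℂ x h : ℂ)‖ ^ 2 :=
      ((continuous_const.inner continuous_id).norm.pow 2)
    exact measurableSet_lt hcont.measurable measurable_const
  have hEeq : {h : EuclideanSpace ℂ (Fin t) | ∃ x ∈ B, ‖(inner ℂ x h : ℂ)‖ ^ 2 * P < β}
      = ⋃ x ∈ B, A x := by
    ext h
    simp only [Set.mem_setOf_eq, Set.mem_iUnion, hA]
    constructor
    · rintro ⟨x, hxB, hlt⟩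
      exact ⟨x, hxB, (lt_div_iff₀ hP0).mpr hlt⟩
    · rintro ⟨x, hxB, hlt⟩
      exact ⟨x, hxB, (lt_div_iff₀ hP0).mp hlt⟩
  set Eset : Set (EuclideanSpace ℂ (Fin t)) :=
    {h | ∃ x ∈ B, ‖(inner ℂ x h : ℂ)‖ ^ 2 * P < β} with hEdef
  have hEmeas : MeasurableSet Eset := by
    rw [hEeq]
    exact (B : Finset _).measurableSet_biUnion (fun x _ => hAmeas x)
  have hunion : stdCGauss t Eset ≤ (B.card : ENNReal) * ENNReal.ofReal (β / P) := by
    calc stdCGauss t Eset = stdCGauss t (⋃ x ∈ B, A x) := by rw [hEeq]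
      _ ≤ ∑ x ∈ B, stdCGauss t (A x) := measure_biUnion_finset_le B A
      _ ≤ ∑ _x ∈ B, ENNReal.ofReal (β / P) := by
          refine Finset.sum_le_sum fun x hx => ?_
          exact vlq_vector_bound x (hBunit x hx) (β / P) hc'
      _ = (B.card : ENNReal) * ENNReal.ofReal (β / P) := by
          rw [Finset.sum_const, nsmul_eq_mul]
  have hm : (stdCGauss t Eset).toReal ≤ (B.card : ℝ) * (β / P) := by
    apply ENNReal.toReal_le_of_le_ofReal (by positivity)
    refine le_trans hunion ?_
    rw [← ENNReal.ofReal_natCast, ← ENNReal.ofReal_mul (by positivity)]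
  set m : ℝ := (stdCGauss t Eset).toReal with hmdef
  have hm0 : 0 ≤ m := ENNReal.toReal_nonneg
  have hcompl : (stdCGauss t Esetᶜ).toReal = 1 - m := by
    rw [prob_compl_eq_one_sub hEmeas, ENNReal.toReal_sub_of_le prob_le_one ENNReal.one_ne_top,
      ENNReal.toReal_one]
  set k : ℝ := (⌈Real.logb 2 (B.card : ℝ)⌉ : ℝ) with hkdef
  have hcard1 : (1 : ℝ) ≤ (B.card : ℝ) := by
    have := Finset.card_pos.mpr hB
    exact_mod_cast this
  have hk0 : 0 ≤ k := by
    rw [hkdef]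
    exact_mod_cast Int.ceil_nonneg (Real.logb_nonneg one_lt_two hcard1)
  have hkle : k ≤ Real.logb 2 (4 * (B.card : ℝ)) := by
    have h1 : k ≤ Real.logb 2 (B.card : ℝ) + 1 := (Int.ceil_lt_add_one _).le
    have h2 : Real.logb 2 (B.card : ℝ) + 1 = Real.logb 2 (2 * (B.card : ℝ)) := by
      rw [Real.logb_mul two_ne_zero (by linarith), Real.logb_self_eq_one one_lt_two]
      ring
    have h3 : Real.logb 2 (2 * (B.card : ℝ)) ≤ Real.logb 2 (4 * (B.card : ℝ)) :=
      (Real.logb_le_logb one_lt_two (by linarith) (by linarith)).mpr (by linarith)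
    linarith
  have hL0 : 0 ≤ Real.logb 2 (4 * (B.card : ℝ)) := le_trans hk0 hkle
  have hprod : m * k ≤ ((B.card : ℝ) * (β / P)) * Real.logb 2 (4 * (B.card : ℝ)) :=
    mul_le_mul hm hkle hk0 (by positivity)
  have hfinal : ((B.card : ℝ) * (β / P)) * Real.logb 2 (4 * (B.card : ℝ))
      = ((t : ℝ) + 1) * (B.card : ℝ) * Real.logb 2 (4 * (B.card : ℝ)) * Real.log P / P := by
    rw [hβdef]
    ring
  calc (stdCGauss t Esetᶜ).toReal * 1 + (stdCGauss t Eset).toReal * (1 + k)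
      = (1 - m) * 1 + m * (1 + k) := by rw [hcompl]
    _ = 1 + m * k := by ring
    _ ≤ 1 + ((t : ℝ) + 1) * (B.card : ℝ) * Real.logb 2 (4 * (B.card : ℝ)) * Real.log P / P := by
        rw [← hfinal]
        linarith
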